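/- For 0 ≤ λ < ρ ≤ σ, σ ∈ (0,2π), and θ > 0, ∫₀^λ ∫₀^ρ Φ_σ(θ, φ, φ₀) dφ₀ dφ = (2λ/θ) sinh(πθ) + (sinh(πθ)/(θ² sinh(σθ))) [cosh((σ - ρ - λ)θ) - cosh((σ - ρ + λ)θ)], where Φ_σ(θ,φ,φ₀) := cosh((π - |φ₀ - φ|)θ) + (sinh(πθ)/sinh(σθ)) cosh((φ + φ₀ - σ)θ) + (sinh((π-σ)θ)/sinh(σθ)) cosh((φ - φ₀)θ). -/

import Mathlib

open Real MeasureTheory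

noncomputable def Phi (σ θ φ φ₀ : ℝ) : ℝ :=
  Real.cosh ((π - |φ₀ - φ|) * θ) +
    Real.sinh (π * θ) / Real.sinh (σ * θ) * Real.cosh ((φ + φ₀ - σ) * θ) +
    Real.sinh ((π - σ) * θ) / Real.sinh (σ * θ) * Real.cosh ((φ - φ₀) * θ)

lemma intCoshLin {c : ℝ} (hc : c ≠ 0) (d a b : ℝ) :
    ∫ x in a..b, Real.cosh (c * x + d)
      = (Real.sinh (c * b + d) - Real.sinh (c * a + d)) / c := by
  have h : ∀ x, HasDerivAt (fun x => Real.sinh (c * x + d) / c) (Real.cosh (c * x + d)) x := by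
    intro x
    have h1 : HasDerivAt (fun x : ℝ => c * x + d) c x :=
      by simpa using ((hasDerivAt_id x).const_mul c).add_const d
    have h2 := (h1.sinh).div_const c
    simpa [mul_div_cancel_right₀ _ hc] using h2
  rw [intervalIntegral.integral_eq_sub_of_hasDerivAt (fun x _ => h x)
    ((Real.continuous_cosh.comp (by continuity)).intervalIntegrable a b)]
  ring

lemma inner_eq (σ ρ θ : ℝ) (hθ : θ ≠ 0) (φ : ℝ) (h0 : 0 ≤ φ) (hρ : φ ≤ ρ) :
    ∫ φ₀ in (0:ℝ)..ρ, Phi σ θ φ φ₀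
      = 2 * Real.sinh (π * θ) / θ
        - θ⁻¹ * (Real.sinh ((-θ) * φ + π * θ) + Real.sinh (θ * φ + (π - ρ) * θ))
        + Real.sinh (π * θ) / Real.sinh (σ * θ) * θ⁻¹ *
            (Real.sinh (θ * φ + (ρ - σ) * θ) - Real.sinh (θ * φ + (-σ) * θ))
        + Real.sinh ((π - σ) * θ) / Real.sinh (σ * θ) * θ⁻¹ *
            (Real.sinh (θ * φ + (0:ℝ)) - Real.sinh (θ * φ + (-ρ) * θ)) := by
  have hcont : ∀ c d : ℝ, IntervalIntegrable (fun x => Real.cosh (c * x + d)) volume 0 ρ :=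
    fun c d => (Real.continuous_cosh.comp (by continuity)).intervalIntegrable 0 ρ
  have habs : ∀ a b : ℝ, IntervalIntegrable
      (fun φ₀ => Real.cosh ((π - |φ₀ - φ|) * θ)) volume a b :=
    fun a b => (Real.continuous_cosh.comp (by continuity)).intervalIntegrable a b
  have e1 : ∫ φ₀ in (0:ℝ)..ρ, Real.cosh ((π - |φ₀ - φ|) * θ)
      = (∫ φ₀ in (0:ℝ)..φ, Real.cosh (θ * φ₀ + (π - φ) * θ))
        + ∫ φ₀ in φ..ρ, Real.cosh ((-θ) * φ₀ + (π + φ) * θ) := by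
    rw [← intervalIntegral.integral_add_adjacent_intervals (habs 0 φ) (habs φ ρ)]
    congr 1
    · apply intervalIntegral.integral_congr
      intro x hx
      rw [Set.uIcc_of_le h0] at hx
      show Real.cosh ((π - |x - φ|) * θ) = Real.cosh (θ * x + (π - φ) * θ)
      rw [abs_of_nonpos (by linarith [hx.2])]
      ring_nf
    · apply intervalIntegral.integral_congr
      intro x hx
      rw [Set.uIcc_of_le hρ] at hx
      show Real.cosh ((π - |x - φ|) * θ) = Real.cosh ((-θ) * x + (π + φ) * θ)
      rw [abs_of_nonneg (by linarith [hx.1])]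
      ring_nf
  have key : ∫ φ₀ in (0:ℝ)..ρ, Phi σ θ φ φ₀
      = (∫ φ₀ in (0:ℝ)..ρ, Real.cosh ((π - |φ₀ - φ|) * θ))
        + Real.sinh (π * θ) / Real.sinh (σ * θ) *
            (∫ φ₀ in (0:ℝ)..ρ, Real.cosh (θ * φ₀ + (φ - σ) * θ))
        + Real.sinh ((π - σ) * θ) / Real.sinh (σ * θ) *
            (∫ φ₀ in (0:ℝ)..ρ, Real.cosh ((-θ) * φ₀ + φ * θ)) := by
    rw [← intervalIntegral.integral_const_mul, ← intervalIntegral.integral_const_mul,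
      ← intervalIntegral.integral_add (habs 0 ρ) ((hcont θ ((φ - σ) * θ)).const_mul _),
      ← intervalIntegral.integral_add ((habs 0 ρ).add ((hcont θ ((φ - σ) * θ)).const_mul _))
        ((hcont (-θ) (φ * θ)).const_mul _)]
    apply intervalIntegral.integral_congr
    intro x _
    unfold Phi
    ring_nf
  rw [key, e1, intCoshLin hθ ((π - φ) * θ) 0 φ, intCoshLin (neg_ne_zero.mpr hθ) ((π + φ) * θ) φ ρ,
    intCoshLin hθ ((φ - σ) * θ) 0 ρ, intCoshLin (neg_ne_zero.mpr hθ) (φ * θ) 0 ρ]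
  ring_nf

lemma intSinhLin {c : ℝ} (hc : c ≠ 0) (d a b : ℝ) :
    ∫ x in a..b, Real.sinh (c * x + d)
      = (Real.cosh (c * b + d) - Real.cosh (c * a + d)) / c := by
  have h : ∀ x, HasDerivAt (fun x => Real.cosh (c * x + d) / c) (Real.sinh (c * x + d)) x := by
    intro x
    have h1 : HasDerivAt (fun x : ℝ => c * x + d) c x :=
      by simpa using ((hasDerivAt_id x).const_mul c).add_const d
    have h2 := (h1.cosh).div_const c
    simpa [mul_div_cancel_right₀ _ hc] using h2
  rw [intervalIntegral.integral_eq_sub_of_hasDerivAt (fun x _ => h x)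
    ((Real.continuous_sinh.comp (by continuity)).intervalIntegrable a b)]
  ring

set_option maxHeartbeats 2000000 in
theorem stmt14 (σ ρ lam θ : ℝ) (hlam : 0 ≤ lam) (hlr : lam < ρ) (hrs : ρ ≤ σ)
    (hσ : σ ∈ Set.Ioo 0 (2 * π)) (hθ : 0 < θ) :
    ∫ φ in (0:ℝ)..lam, ∫ φ₀ in (0:ℝ)..ρ, Phi σ θ φ φ₀
      = (2 * lam / θ) * Real.sinh (π * θ)
        + (Real.sinh (π * θ) / (θ ^ 2 * Real.sinh (σ * θ))) *
            (Real.cosh ((σ - ρ - lam) * θ) - Real.cosh ((σ - ρ + lam) * θ)) := by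
  have hθ' : θ ≠ 0 := ne_of_gt hθ
  have hS : Real.sinh (σ * θ) ≠ 0 :=
    Real.sinh_ne_zero.mpr (ne_of_gt (mul_pos hσ.1 hθ))
  have hcong : ∫ φ in (0:ℝ)..lam, ∫ φ₀ in (0:ℝ)..ρ, Phi σ θ φ φ₀
      = ∫ φ in (0:ℝ)..lam,
          (2 * Real.sinh (π * θ) / θ
          - θ⁻¹ * (Real.sinh ((-θ) * φ + π * θ) + Real.sinh (θ * φ + (π - ρ) * θ))
          + Real.sinh (π * θ) / Real.sinh (σ * θ) * θ⁻¹ *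
              (Real.sinh (θ * φ + (ρ - σ) * θ) - Real.sinh (θ * φ + (-σ) * θ))
          + Real.sinh ((π - σ) * θ) / Real.sinh (σ * θ) * θ⁻¹ *
              (Real.sinh (θ * φ + (0:ℝ)) - Real.sinh (θ * φ + (-ρ) * θ))) := by
    apply intervalIntegral.integral_congr
    intro x hx
    rw [Set.uIcc_of_le hlam] at hx
    exact inner_eq σ ρ θ hθ' x hx.1 (by linarith [hx.2])
  rw [hcong]
  have hsi : ∀ c d : ℝ, IntervalIntegrable (fun x => Real.sinh (c * x + d)) volume 0 lam :=
    fun c d => (Real.continuous_sinh.comp (by continuity)).intervalIntegrable 0 lam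
  have i1 : IntervalIntegrable (fun _ : ℝ => 2 * Real.sinh (π * θ) / θ) volume 0 lam :=
    intervalIntegrable_const
  have i2 : IntervalIntegrable (fun φ => θ⁻¹ *
      (Real.sinh ((-θ) * φ + π * θ) + Real.sinh (θ * φ + (π - ρ) * θ))) volume 0 lam :=
    ((hsi (-θ) (π * θ)).add (hsi θ ((π - ρ) * θ))).const_mul _
  have i3 : IntervalIntegrable (fun φ => Real.sinh (π * θ) / Real.sinh (σ * θ) * θ⁻¹ *
      (Real.sinh (θ * φ + (ρ - σ) * θ) - Real.sinh (θ * φ + (-σ) * θ))) volume 0 lam :=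
    ((hsi θ ((ρ - σ) * θ)).sub (hsi θ ((-σ) * θ))).const_mul _
  have i4 : IntervalIntegrable (fun φ => Real.sinh ((π - σ) * θ) / Real.sinh (σ * θ) * θ⁻¹ *
      (Real.sinh (θ * φ + (0:ℝ)) - Real.sinh (θ * φ + (-ρ) * θ))) volume 0 lam :=
    ((hsi θ 0).sub (hsi θ ((-ρ) * θ))).const_mul _
  rw [intervalIntegral.integral_add ((i1.sub i2).add i3) i4,
    intervalIntegral.integral_add (i1.sub i2) i3,
    intervalIntegral.integral_sub i1 i2,
    intervalIntegral.integral_const,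
    intervalIntegral.integral_const_mul, intervalIntegral.integral_const_mul,
    intervalIntegral.integral_const_mul,
    intervalIntegral.integral_add (hsi (-θ) (π * θ)) (hsi θ ((π - ρ) * θ)),
    intervalIntegral.integral_sub (hsi θ ((ρ - σ) * θ)) (hsi θ ((-σ) * θ)),
    intervalIntegral.integral_sub (hsi θ 0) (hsi θ ((-ρ) * θ)),
    intSinhLin (neg_ne_zero.mpr hθ') (π * θ) 0 lam,
    intSinhLin hθ' ((π - ρ) * θ) 0 lam,
    intSinhLin hθ' ((ρ - σ) * θ) 0 lam,
    intSinhLin hθ' ((-σ) * θ) 0 lam,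
    intSinhLin hθ' (0:ℝ) 0 lam,
    intSinhLin hθ' ((-ρ) * θ) 0 lam]
  ring_nf
  have hS' : Real.sinh (θ * σ) ≠ 0 := by rwa [mul_comm]
  field_simp
  simp only [Real.cosh_eq, Real.sinh_eq, Real.exp_add, Real.exp_sub, Real.exp_neg, neg_add,
    neg_sub, neg_neg, Real.exp_zero, smul_eq_mul, mul_inv, inv_inv]
  simp only [mul_add, mul_sub, mul_neg, Real.exp_add, Real.exp_sub, Real.exp_neg]
  field_simp
  ring
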